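/- Let A be a Noetherian domain and M a finitely presented left A-module. Then M is a torsion module if and only if its dual M* = Hom_A(M, A) is zero. -/

import Mathlib

open Finset Submodule in
/-- In a left Noetherian domain, any two nonzero elements have a nonzero common
left multiple: `u * s = v * a ≠ 0`. -/
theorem exists_left_common_mul' {A : Type*} [Ring A] [IsDomain A] [IsNoetherianRing A]
    {a s : A} (ha : a ≠ 0) (hs : s ≠ 0) :
    ∃ u v : A, u * s = v * a ∧ u * s ≠ 0 := by
  have key : ∀ n : ℕ, a * s ^ n ∈ span A (Set.range fun k : Fin n => a * s ^ (k : ℕ)) →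
      ∃ u v : A, u * s = v * a ∧ u * s ≠ 0 := by
    intro n
    induction n with
    | zero =>
      intro h
      simp only [Set.range_eq_empty, span_empty, mem_bot, pow_zero, mul_one] at h
      exact absurd h ha
    | succ n ih =>
      intro h
      rw [mem_span_range_iff_exists_fun] at h
      obtain ⟨c, hc⟩ := h
      rw [Fin.sum_univ_succ] at hc
      simp only [smul_eq_mul, Fin.val_zero, pow_zero, mul_one, Fin.val_succ] at hc
      -- hc : c 0 * a + ∑ i : Fin n, c i.succ * (a * s ^ ((i:ℕ)+1)) = a * s ^ (n+1)
      set w : A := a * s ^ n - ∑ i : Fin n, c i.succ * (a * s ^ (i : ℕ)) with hw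
      have hps : ∀ i : ℕ, a * s ^ i * s = a * s ^ (i+1) := fun i => by
        rw [pow_succ, mul_assoc]
      have hws : w * s = c 0 * a := by
        rw [hw, sub_mul, Finset.sum_mul, sub_eq_iff_eq_add]
        calc a * s ^ n * s = a * s ^ (n+1) := hps n
          _ = c 0 * a + ∑ i : Fin n, c i.succ * (a * s ^ ((i:ℕ)+1)) := hc.symm
          _ = c 0 * a + ∑ i : Fin n, c i.succ * (a * s ^ (i:ℕ)) * s := by
              congr 1
              exact Finset.sum_congr rfl fun i _ => by rw [mul_assoc, hps]
      by_cases hwz : w * s = 0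
      · have hw0 : w = 0 := by
          rcases mul_eq_zero.mp hwz with h | h
          · exact h
          · exact absurd h hs
        have : a * s ^ n ∈ span A (Set.range fun k : Fin n => a * s ^ (k : ℕ)) := by
          rw [mem_span_range_iff_exists_fun]
          refine ⟨fun i => c i.succ, ?_⟩
          simp only [smul_eq_mul]
          have h3 : a * s ^ n - ∑ i : Fin n, c i.succ * (a * s ^ (i:ℕ)) = 0 := by
            rw [← hw]; exact hw0
          exact (sub_eq_zero.mp h3).symm
        exact ih this
      · exact ⟨w, c 0, hws, hwz⟩
  -- the chain stabilizes
  have hmono : Monotone fun n => span A (Set.range fun k : Fin n => a * s ^ (k : ℕ)) := by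
    intro m n hmn
    apply span_mono
    rintro x ⟨k, rfl⟩
    exact ⟨⟨k, lt_of_lt_of_le k.2 hmn⟩, rfl⟩
  obtain ⟨n, hn⟩ := monotone_stabilizes_iff_noetherian.mpr
    (inferInstance : IsNoetherian A A) ⟨_, hmono⟩
  apply key n
  have h1 : a * s ^ n ∈ span A (Set.range fun k : Fin (n+1) => a * s ^ (k : ℕ)) :=
    subset_span ⟨⟨n, n.lt_succ_self⟩, rfl⟩
  have h2 : span A (Set.range fun k : Fin n => a * s ^ (k : ℕ)) =
      span A (Set.range fun k : Fin (n+1) => a * s ^ (k : ℕ)) := hn (n+1) (Nat.le_succ n)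
  rwa [← h2] at h1

open nonZeroDivisors

section Ore
variable {A : Type*} [Ring A] [IsDomain A]

/-- Right version, via the opposite ring. -/
theorem exists_right_common_mul' [IsNoetherianRing Aᵐᵒᵖ]
    {a s : A} (ha : a ≠ 0) (hs : s ≠ 0) :
    ∃ u v : A, s * u = a * v ∧ s * u ≠ 0 := by
  have ha' : (MulOpposite.op a) ≠ 0 := by simpa using ha
  have hs' : (MulOpposite.op s) ≠ 0 := by simpa using hs
  obtain ⟨u, v, huv, hne⟩ := exists_left_common_mul' (A := Aᵐᵒᵖ) ha' hs'
  refine ⟨u.unop, v.unop, ?_, ?_⟩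
  · have := congrArg MulOpposite.unop huv
    simpa using this
  · intro h
    apply hne
    rw [← MulOpposite.op_unop u, ← MulOpposite.op_mul]
    simp [h]

variable [IsNoetherianRing A]

/-- The nonzero elements of a Noetherian domain form a left Ore set. -/
noncomputable def noetherianOreSet : OreLocalization.OreSet (A⁰) := by
  apply Classical.choice
  rw [OreLocalization.nonempty_oreSet_iff_of_noZeroDivisors]
  intro r s
  by_cases hr : r = 0
  · exact ⟨0, 1, by simp [hr]⟩
  · obtain ⟨u, v, huv, hne⟩ := exists_left_common_mul' (a := (s : A)) (s := r)
      (nonZeroDivisors.coe_ne_zero s) hr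
    have hu : u ≠ 0 := fun h => hne (by simp [h])
    exact ⟨v, ⟨u, mem_nonZeroDivisors_of_ne_zero hu⟩, huv⟩

end Ore

section Loc
variable {A : Type*} [Ring A] [IsDomain A] [OreLocalization.OreSet (A⁰)]

local notation "Q" => OreLocalization (A⁰) A
local notation "j" => (OreLocalization.numeratorRingHom : A →+* Q)

theorem j_injective : Function.Injective (j : A →+* Q) := by
  have hS : (A⁰) ≤ nonZeroDivisorsLeft A := by
    intro x hx
    rw [mem_nonZeroDivisorsLeft_iff]
    intro y hy
    rcases mul_eq_zero.mp hy with h | h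
    · exact absurd h (nonZeroDivisors.ne_zero hx)
    · exact h
  exact OreLocalization.numeratorHom_inj hS

theorem j_eq_zero_iff {t : A} : (j t : Q) = 0 ↔ t = 0 := by
  constructor
  · intro h; exact j_injective (by simpa using h)
  · rintro rfl; simp

theorem exists_left_denom (q : Q) : ∃ t b : A, t ≠ 0 ∧ (j t) * q = j b := by
  induction q using OreLocalization.ind with
  | _ r s =>
    refine ⟨s, r, nonZeroDivisors.coe_ne_zero s, ?_⟩
    show OreLocalization.numeratorHom (s : A) * _ = OreLocalization.numeratorHom r
    rw [OreLocalization.numeratorHom_apply, OreLocalization.numeratorHom_apply]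
    exact OreLocalization.mul_cancel

end Loc

section Loc2
variable {A : Type*} [Ring A] [IsDomain A] [IsNoetherianRing A] [IsNoetherianRing Aᵐᵒᵖ]
  [OreLocalization.OreSet (A⁰)]

local notation "Q" => OreLocalization (A⁰) A
local notation "j" => (OreLocalization.numeratorRingHom : A →+* Q)

theorem exists_right_denom (q : Q) : ∃ t b : A, t ≠ 0 ∧ q * (j t) = j b := by
  obtain ⟨t, b, ht, htb⟩ := exists_left_denom q
  by_cases hb : b = 0
  · have : (j t : Q) * q = 0 := by rw [htb, hb, map_zero]
    have hq : q = 0 := by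
      rcases mul_eq_zero.mp this with h | h
      · exact absurd (j_eq_zero_iff.mp h) ht
      · exact h
    exact ⟨1, 0, one_ne_zero, by simp [hq]⟩
  · obtain ⟨u, v, huv, hne⟩ := exists_right_common_mul' (a := t) (s := b) ht hb
    -- huv : b * u = t * v
    have hu : u ≠ 0 := fun h => hne (by simp [h])
    refine ⟨u, v, hu, ?_⟩
    have : (j t : Q) * (q * j u) = (j t) * (j v) := by
      rw [← mul_assoc, htb, ← map_mul, ← map_mul, huv]
    exact mul_left_cancel₀ (j_eq_zero_iff.not.mpr ht) this

theorem exists_common_right_denom {ι : Type*} [Fintype ι] (q : ι → Q) :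
    ∃ t : A, t ≠ 0 ∧ ∀ i, ∃ b : A, q i * (j t) = j b := by
  classical
  suffices h : ∀ T : Finset ι, ∃ t : A, t ≠ 0 ∧ ∀ i ∈ T, ∃ b : A, q i * (j t) = j b by
    obtain ⟨t, ht, hT⟩ := h Finset.univ
    exact ⟨t, ht, fun i => hT i (Finset.mem_univ i)⟩
  intro T
  induction T using Finset.induction_on with
  | empty => exact ⟨1, one_ne_zero, fun i hi => absurd hi (Finset.notMem_empty i)⟩
  | insert _ _ hnotmem _ =>
    rename_i i₀ T' ih
    obtain ⟨t', ht', hT'⟩ := ih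
    obtain ⟨t₀, b₀, ht₀, hb₀⟩ := exists_right_denom (q i₀)
    obtain ⟨u, v, huv, hne⟩ := exists_right_common_mul' (a := t₀) (s := t') ht₀ ht'
    have htu : t' * u ≠ 0 := hne
    refine ⟨t' * u, htu, fun i hi => ?_⟩
    rcases Finset.mem_insert.mp hi with rfl | hi'
    · refine ⟨b₀ * v, ?_⟩
      rw [huv, map_mul, ← mul_assoc, hb₀, ← map_mul]
    · obtain ⟨b, hb⟩ := hT' i hi'
      refine ⟨b * u, ?_⟩
      rw [map_mul, ← mul_assoc, hb, ← map_mul]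

theorem exists_common_left_denom {ι : Type*} [Fintype ι] (q : ι → Q) :
    ∃ t : A, t ≠ 0 ∧ ∀ i, ∃ b : A, (j t) * q i = j b := by
  classical
  suffices h : ∀ T : Finset ι, ∃ t : A, t ≠ 0 ∧ ∀ i ∈ T, ∃ b : A, (j t) * q i = j b by
    obtain ⟨t, ht, hT⟩ := h Finset.univ
    exact ⟨t, ht, fun i => hT i (Finset.mem_univ i)⟩
  intro T
  induction T using Finset.induction_on with
  | empty => exact ⟨1, one_ne_zero, fun i hi => absurd hi (Finset.notMem_empty i)⟩
  | insert _ _ hnotmem _ =>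
    rename_i i₀ T' ih
    obtain ⟨t', ht', hT'⟩ := ih
    obtain ⟨t₀, b₀, ht₀, hb₀⟩ := exists_left_denom (q i₀)
    obtain ⟨u, v, huv, hne⟩ := exists_left_common_mul' (a := t₀) (s := t') ht₀ ht'
    -- huv : u * t' = v * t₀
    have htu : u * t' ≠ 0 := hne
    refine ⟨u * t', htu, fun i hi => ?_⟩
    rcases Finset.mem_insert.mp hi with rfl | hi'
    · refine ⟨v * b₀, ?_⟩
      rw [huv, map_mul, mul_assoc, hb₀, ← map_mul]
    · obtain ⟨b, hb⟩ := hT' i hi'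
      refine ⟨u * b, ?_⟩
      rw [map_mul, mul_assoc, hb, ← map_mul]
end Loc2



section Torsion
variable {A : Type*} [Ring A] [IsDomain A] [IsNoetherianRing A]
  {M : Type*} [AddCommGroup M] [Module A M]

theorem torsion_smul (c : A) {z : M} (h : ∃ d : A, d ≠ 0 ∧ d • z = 0) :
    ∃ d : A, d ≠ 0 ∧ d • (c • z) = 0 := by
  obtain ⟨d, hd, hdz⟩ := h
  by_cases hc : c = 0
  · exact ⟨1, one_ne_zero, by simp [hc]⟩
  · obtain ⟨u, v, huv, hne⟩ := exists_left_common_mul' (a := d) (s := c) hd hc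
    have hu : u ≠ 0 := fun h => hne (by simp [h])
    refine ⟨u, hu, ?_⟩
    rw [smul_smul, huv, ← smul_smul, hdz, smul_zero]

theorem torsion_add {z₁ z₂ : M} (h₁ : ∃ d : A, d ≠ 0 ∧ d • z₁ = 0)
    (h₂ : ∃ d : A, d ≠ 0 ∧ d • z₂ = 0) :
    ∃ d : A, d ≠ 0 ∧ d • (z₁ + z₂) = 0 := by
  obtain ⟨d₁, hd₁, hz₁⟩ := h₁
  obtain ⟨d₂, hd₂, hz₂⟩ := h₂
  obtain ⟨u, v, huv, hne⟩ := exists_left_common_mul' (a := d₂) (s := d₁) hd₂ hd₁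
  refine ⟨u * d₁, hne, ?_⟩
  rw [smul_add, ← smul_smul, hz₁, smul_zero, huv, ← smul_smul, hz₂, smul_zero, add_zero]

theorem torsion_sum {ι : Type*} (T : Finset ι) (z : ι → M)
    (h : ∀ i ∈ T, ∃ d : A, d ≠ 0 ∧ d • z i = 0) :
    ∃ d : A, d ≠ 0 ∧ d • (∑ i ∈ T, z i) = 0 := by
  classical
  induction T using Finset.induction_on with
  | empty => exact ⟨1, one_ne_zero, by simp⟩
  | insert _ _ hnotmem _ =>
    rename_i i₀ T' ih
    rw [Finset.sum_insert hnotmem]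
    exact torsion_add (h i₀ (Finset.mem_insert_self i₀ T'))
      (ih fun i hi => h i (Finset.mem_insert_of_mem hi))

end Torsion

theorem pi_rep {R : Type*} [Semiring R] {n : ℕ} (y : Fin n → R) :
    y = ∑ i, y i • (Pi.single i (1 : R) : Fin n → R) := by
  funext k
  simp [Finset.sum_apply, Pi.single_apply]

/-- The right-multiplication functional `y ↦ ∑ i, y i * a i`, which is left `A`-linear. -/
def dotRight {A : Type*} [Semiring A] {n : ℕ} (a : Fin n → A) : (Fin n → A) →ₗ[A] A where
  toFun y := ∑ i, y i * a i
  map_add' y z := by simp [add_mul, Finset.sum_add_distrib]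
  map_smul' c y := by simp [Finset.mul_sum, mul_assoc]

theorem dotRight_apply {A : Type*} [Semiring A] {n : ℕ} (a y : Fin n → A) :
    dotRight a y = ∑ i, y i * a i := rfl

theorem dotRight_single {A : Type*} [Semiring A] {n : ℕ} (a : Fin n → A) (i : Fin n) :
    dotRight a (Pi.single i 1) = a i := by
  rw [dotRight_apply]
  simp [Pi.single_apply]

/-- Let `A` be a (left and right) Noetherian domain and `M` a finitely
presented left `A`-module (given by a finite presentation `A^s → A^r → M → 0`).  Then `M`
is a torsion module (every element is annihilated by some nonzero element of `A`) if and
only if its dual `M* = Hom_A(M, A)` is zero. -/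
theorem torsion_iff_dual_eq_zero {A : Type*} [Ring A] [IsDomain A]
    [IsNoetherianRing A] [IsNoetherianRing Aᵐᵒᵖ]
    (M : Type*) [AddCommGroup M] [Module A M]
    {s r : ℕ} (f₁ : (Fin s → A) →ₗ[A] (Fin r → A))
    (π : (Fin r → A) →ₗ[A] M) (hπ : Function.Surjective π)
    (hexact : LinearMap.ker π = LinearMap.range f₁) :
    (∀ x : M, ∃ a : A, a ≠ 0 ∧ a • x = 0) ↔ (∀ f : M →ₗ[A] A, f = 0) := by
  constructor
  · -- easy direction
    intro htor f
    apply LinearMap.ext; intro x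
    obtain ⟨a, ha, hax⟩ := htor x
    have h1 : a * f x = 0 := by
      have h := congrArg f hax
      rw [map_smul, smul_eq_mul, map_zero] at h
      exact h
    simp only [LinearMap.zero_apply]
    rcases mul_eq_zero.mp h1 with h | h
    · exact absurd h ha
    · exact h
  · intro hdual x
    classical
    letI : OreLocalization.OreSet (A⁰) := noetherianOreSet (A := A)
    set B : Fin s → Fin r → A := fun jj => f₁ (Pi.single jj 1) with hB_def
    -- Step 1: dual-vanishing gives right-independence of the columns over A
    have hB : ∀ a : Fin r → A, (∀ jj, ∑ i, B jj i * a i = 0) → a = 0 := by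
      intro a hja
      have hψπ : LinearMap.ker π ≤ LinearMap.ker (dotRight a) := by
        rw [hexact]
        rintro y ⟨z, rfl⟩
        have hz : f₁ z = ∑ jj, z jj • f₁ (Pi.single jj (1 : A)) := by
          conv_lhs => rw [pi_rep z]
          rw [map_sum]
          simp_rw [map_smul]
        rw [LinearMap.mem_ker, hz, map_sum]
        apply Finset.sum_eq_zero
        intro jj _
        rw [map_smul, smul_eq_mul]
        have : dotRight a (f₁ (Pi.single jj 1)) = 0 := by
          rw [dotRight_apply]; exact hja jj
        rw [this, mul_zero]
      set f₀ := Submodule.liftQ (LinearMap.ker π) (dotRight a) hψπ with hf₀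
      set e := π.quotKerEquivOfSurjective hπ with he
      have hf : (f₀.comp (e.symm.toLinearMap)) = 0 := hdual _
      have hψ0 : ∀ y, dotRight a y = 0 := by
        intro y
        have h1 : f₀ (Submodule.Quotient.mk y) = dotRight a y := Submodule.liftQ_apply _ _ _
        have h2 : f₀ (Submodule.Quotient.mk y) =
            (f₀.comp e.symm.toLinearMap) (e (Submodule.Quotient.mk y)) := by
          simp
        rw [hf] at h2
        simp only [LinearMap.zero_apply] at h2
        rw [← h1, h2]
      funext i
      rw [← dotRight_single a i, hψ0, Pi.zero_apply]
    -- Step 2: independence over the Ore division ring Q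
    have hBQ : ∀ q : Fin r → OreLocalization (A⁰) A,
        (∀ jj, ∑ i, OreLocalization.numeratorRingHom (B jj i) * q i = 0) → q = 0 := by
      intro q hq
      obtain ⟨t, ht, hden⟩ := exists_common_right_denom q
      choose b hbq using hden
      have hb0 : ∀ jj, ∑ i, B jj i * b i = 0 := by
        intro jj
        apply j_injective
        rw [map_sum, map_zero]
        have h3 : ∀ i, OreLocalization.numeratorRingHom (B jj i * b i) =
            (OreLocalization.numeratorRingHom (B jj i) * q i) *
              OreLocalization.numeratorRingHom t := by
          intro i
          rw [map_mul, ← hbq, mul_assoc]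
        rw [Finset.sum_congr rfl fun i _ => h3 i, ← Finset.sum_mul, hq jj, zero_mul]
      have hb : b = 0 := hB b hb0
      funext i
      have h4 : q i * OreLocalization.numeratorRingHom t = 0 := by
        rw [hbq i, hb]; simp
      rcases mul_eq_zero.mp h4 with h | h
      · exact h
      · exact absurd (j_eq_zero_iff.mp h) ht
    -- Step 3: the rows span everything over Q
    set w : Fin s → (Fin r → OreLocalization (A⁰) A) :=
      fun jj i => OreLocalization.numeratorRingHom (B jj i) with hw_def
    have hspan : Submodule.span (OreLocalization (A⁰) A) (Set.range w) = ⊤ := by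
      by_contra hW
      obtain ⟨y₀, hy₀⟩ : ∃ y₀, y₀ ∉ Submodule.span (OreLocalization (A⁰) A) (Set.range w) := by
        by_contra hall
        push_neg at hall
        exact hW (Submodule.eq_top_iff'.mpr hall)
      set W := Submodule.span (OreLocalization (A⁰) A) (Set.range w) with hW_def
      have hv : W.mkQ y₀ ≠ 0 := by
        rw [Submodule.mkQ_apply, ne_eq, Submodule.Quotient.mk_eq_zero]
        exact hy₀
      haveI : Nontrivial ((Fin r → OreLocalization (A⁰) A) ⧸ W) := nontrivial_of_ne _ _ hv
      set bas := Module.Basis.ofVectorSpace (OreLocalization (A⁰) A)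
        ((Fin r → OreLocalization (A⁰) A) ⧸ W) with hbas
      obtain ⟨i₀⟩ := bas.index_nonempty
      set φ : (Fin r → OreLocalization (A⁰) A) →ₗ[OreLocalization (A⁰) A]
          OreLocalization (A⁰) A := (bas.coord i₀).comp W.mkQ with hφ
      set qv : Fin r → OreLocalization (A⁰) A := fun i => φ (Pi.single i 1) with hqv
      have hφrep : ∀ y, φ y = ∑ i, y i * qv i := by
        intro y
        conv_lhs => rw [pi_rep y]
        rw [map_sum]
        simp_rw [map_smul, smul_eq_mul]
        rfl
      have hφw : ∀ jj, φ (w jj) = 0 := by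
        intro jj
        have hmem : w jj ∈ W := Submodule.subset_span ⟨jj, rfl⟩
        simp [hφ, (Submodule.Quotient.mk_eq_zero _).mpr hmem]
      have hq0 : qv = 0 := by
        apply hBQ
        intro jj
        have h5 := hφw jj
        rw [hφrep (w jj)] at h5
        exact h5
      obtain ⟨y₁, hy₁⟩ := Submodule.mkQ_surjective W (bas i₀)
      have h1 : φ y₁ = 1 := by
        simp [hφ, hy₁]
      rw [hφrep y₁, hq0] at h1
      simp at h1
    -- Step 4: each generator of M is torsion
    have hgen : ∀ i : Fin r, ∃ d : A, d ≠ 0 ∧ d • π (Pi.single i 1) = 0 := by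
      intro i
      have hmem : (Pi.single i 1 : Fin r → OreLocalization (A⁰) A) ∈
          Submodule.span (OreLocalization (A⁰) A) (Set.range w) := hspan ▸ Submodule.mem_top
      rw [Submodule.mem_span_range_iff_exists_fun] at hmem
      obtain ⟨c, hc⟩ := hmem
      obtain ⟨d, hd, hden⟩ := exists_common_left_denom c
      choose eA heA using hden
      have hkey : ∀ k, ∑ jj, eA jj * B jj k = (if k = i then d else 0) := by
        intro k
        apply j_injective
        rw [map_sum]
        have h3 : ∀ jj, OreLocalization.numeratorRingHom (eA jj * B jj k) =
            OreLocalization.numeratorRingHom d * (c jj * w jj k) := by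
          intro jj
          rw [map_mul, ← heA, mul_assoc]
        rw [Finset.sum_congr rfl fun jj _ => h3 jj, ← Finset.mul_sum]
        have h4 : ∑ jj, c jj * w jj k = (Pi.single i 1 : Fin r → OreLocalization (A⁰) A) k := by
          rw [← hc]
          simp [Finset.sum_apply]
        rw [h4]
        by_cases hk : k = i
        · simp [hk, Pi.single_apply]
        · simp [hk, Pi.single_apply]
      have hf₁ : f₁ eA = d • (Pi.single i 1 : Fin r → A) := by
        have h6 : f₁ eA = ∑ jj, eA jj • f₁ (Pi.single jj (1 : A)) := by
          conv_lhs => rw [pi_rep eA]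
          rw [map_sum]
          simp_rw [map_smul]
        funext k
        rw [h6]
        simp only [Finset.sum_apply, Pi.smul_apply, smul_eq_mul]
        show (∑ x : Fin s, eA x * B x k) = d * (Pi.single i (1:A) : Fin r → A) k
        rw [hkey k]
        simp [Pi.single_apply]
      have hker : π (f₁ eA) = 0 := by
        have h7 : f₁ eA ∈ LinearMap.ker π := by
          rw [hexact]
          exact ⟨eA, rfl⟩
        simpa using h7
      refine ⟨d, hd, ?_⟩
      rw [← map_smul, ← hf₁, hker]
    -- Step 5: conclude
    obtain ⟨y, rfl⟩ := hπ x
    have hrep : π y = ∑ i, y i • π (Pi.single i 1) := by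
      conv_lhs => rw [pi_rep y]
      rw [map_sum]
      simp_rw [map_smul]
    rw [hrep]
    apply torsion_sum
    intro i _
    exact torsion_smul (y i) (hgen i)
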